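/- Let F be an n×n sub-stochastic matrix, let S₁ = {s : Λ_s[F] < 1} and S₂ = {s : Λ_s[F] = 1} be nonempty, and set α₁ = max{Λ_s[F] : Λ_s[F] < 1} and α₂ = min{F_{ij} : F_{ij} > 0}. Suppose that for every k ∈ S₂ there is a chain of strictly positive entries F_{k i_r}, F_{i_r i_{r-1}}, …, F_{i_2 i_1}, F_{i_1 i} with i ∈ S₁ and consecutive indices distinct, and let |C*| be the maximum length among these chains over all k ∈ S₂. Then ρ(F) ≤ (1 − (1 − α₁)α₂^{|C*|})^{1/(|C*|+1)} < 1. -/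

import Mathlib

open Finset

/-- The spectral radius of a real square matrix. -/
noncomputable def specRad {n : ℕ} (M : Matrix (Fin n) (Fin n) ℝ) : ℝ :=
  ⨆ μ : spectrum ℂ (M.map (algebraMap ℝ ℂ)), ‖(μ : ℂ)‖

/-- A non-zero element chain of length `L ≥ 1` in `F` from `i` to `k`:
indices `p 0 = i, p 1, …, p L = k` with consecutive indices distinct and each
entry `F (p (t+1)) (p t)` strictly positive.  The length is the number of
entries in the chain. -/
def MatChain {n : ℕ} (F : Matrix (Fin n) (Fin n) ℝ) (i k : Fin n) (L : ℕ) : Prop :=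
  1 ≤ L ∧ ∃ p : Fin (L + 1) → Fin n, p 0 = i ∧ p (Fin.last L) = k ∧
    (∀ t : Fin L, p t.succ ≠ p t.castSucc) ∧
    (∀ t : Fin L, 0 < F (p t.succ) (p t.castSucc))

theorem specRad_le_of_chains {n : ℕ} (F : Matrix (Fin n) (Fin n) ℝ)
    (hnn : ∀ i j, 0 ≤ F i j) (hrow : ∀ i, ∑ j, F i j ≤ 1)
    (hS₁ : ∃ s, ∑ j, F s j < 1) (hS₂ : ∃ s, ∑ j, F s j = 1)
    (α₁ α₂ : ℝ)
    (hα₁ : IsGreatest {x | ∃ s, (∑ j, F s j) = x ∧ x < 1} α₁)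
    (hα₂ : IsLeast {x | ∃ i j, F i j = x ∧ 0 < x} α₂)
    (Lstar : ℕ)
    (hchain : ∀ k, (∑ j, F k j) = 1 → ∃ i, (∑ j, F i j) < 1 ∧
      ∃ L, L ≤ Lstar ∧ MatChain F i k L)
    (hmax : ∃ k, (∑ j, F k j) = 1 ∧ ∃ i, (∑ j, F i j) < 1 ∧ MatChain F i k Lstar) :
    specRad F ≤ (1 - (1 - α₁) * α₂ ^ Lstar) ^ ((Lstar + 1 : ℝ)⁻¹) ∧
      (1 - (1 - α₁) * α₂ ^ Lstar) ^ ((Lstar + 1 : ℝ)⁻¹) < 1 := by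
  obtain ⟨s₁, hs₁⟩ := hS₁
  haveI : Nonempty (Fin n) := ⟨s₁⟩
  obtain ⟨sα, hsα, hα₁lt⟩ := hα₁.1
  have hα₁0 : 0 ≤ α₁ := by
    rw [← hsα]; exact Finset.sum_nonneg fun j _ => hnn sα j
  obtain ⟨i₂, j₂, hij₂, hα₂pos⟩ := hα₂.1
  have hα₂le1 : α₂ ≤ 1 := by
    rw [← hij₂]
    exact le_trans (Finset.single_le_sum (fun j _ => hnn i₂ j) (mem_univ j₂)) (hrow i₂)
  set β : ℝ := 1 - (1 - α₁) * α₂ ^ Lstar with hβdef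
  have hpowle1 : α₂ ^ Lstar ≤ 1 := pow_le_one₀ hα₂pos.le hα₂le1
  have hβ0 : 0 ≤ β := by
    have h1 : (1 - α₁) * α₂ ^ Lstar ≤ 1 * 1 :=
      mul_le_mul (by linarith) hpowle1 (pow_nonneg hα₂pos.le _) (by norm_num)
    simp only [hβdef]; linarith
  have hβ1 : β < 1 := by
    have := mul_pos (by linarith : (0:ℝ) < 1 - α₁) (pow_pos hα₂pos Lstar)
    simp only [hβdef]; linarith
  -- row sums of powers
  have hFm_nn : ∀ m i j, 0 ≤ (F ^ m) i j := by
    intro m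
    induction m with
    | zero => intro i j; simp [Matrix.one_apply]; split <;> norm_num
    | succ m ih =>
        intro i j
        rw [pow_succ, Matrix.mul_apply]
        exact Finset.sum_nonneg fun l _ => mul_nonneg (ih i l) (hnn l j)
  have hrec : ∀ m (k : Fin n),
      ∑ j, (F ^ (m + 1)) k j = ∑ j, F k j * ∑ l, (F ^ m) j l := by
    intro m k
    rw [pow_succ']
    simp only [Matrix.mul_apply]
    rw [Finset.sum_comm]
    exact Finset.sum_congr rfl fun l _ => (Finset.mul_sum _ _ _).symm
  have h0 : ∀ k : Fin n, ∑ j, (F ^ 0) k j = 1 := by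
    intro k; simp [Matrix.one_apply]
  have hr_le_one : ∀ m (k : Fin n), ∑ j, (F ^ m) k j ≤ 1 := by
    intro m
    induction m with
    | zero => intro k; exact (h0 k).le
    | succ m ih =>
        intro k
        rw [hrec]
        calc ∑ j, F k j * ∑ l, (F ^ m) j l ≤ ∑ j, F k j * 1 :=
              Finset.sum_le_sum fun j _ => mul_le_mul_of_nonneg_left (ih j) (hnn k j)
          _ ≤ 1 := by simpa using hrow k
  have hr_mono : ∀ m (k : Fin n), ∑ j, (F ^ (m + 1)) k j ≤ ∑ j, (F ^ m) k j := by
    intro m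
    induction m with
    | zero => intro k; rw [h0 k]; exact hr_le_one 1 k
    | succ m ih =>
        intro k
        rw [hrec (m + 1) k, hrec m k]
        exact Finset.sum_le_sum fun j _ => mul_le_mul_of_nonneg_left (ih j) (hnn k j)
  have hr_anti : ∀ (k : Fin n) (m m' : ℕ), m ≤ m' →
      ∑ j, (F ^ m') k j ≤ ∑ j, (F ^ m) k j := by
    intro k m m' h
    induction h with
    | refl => exact le_rfl
    | step h ih => exact le_trans (hr_mono _ _) ih
  -- key chain lemma
  have hkey : ∀ (i k : Fin n) (L : ℕ), (∑ j, F i j) < 1 → MatChain F i k L →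
      ∑ j, (F ^ (L + 1)) k j ≤ 1 - (1 - α₁) * α₂ ^ L := by
    rintro i k L hi ⟨hL1, p, hp0, hpL, -, hppos⟩
    suffices h : ∀ t : ℕ, ∀ ht : t < L + 1,
        (1 - α₁) * α₂ ^ t ≤ 1 - ∑ j, (F ^ (t + 1)) (p ⟨t, ht⟩) j by
      have hfin := h L (Nat.lt_succ_self L)
      have : (⟨L, Nat.lt_succ_self L⟩ : Fin (L + 1)) = Fin.last L := rfl
      rw [this, hpL] at hfin
      linarith
    intro t
    induction t with
    | zero =>
        intro ht
        have hp0' : p ⟨0, ht⟩ = i := by rw [← hp0]; rfl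
        rw [hp0', pow_zero, mul_one, pow_one]
        have hiα : ∑ j, F i j ≤ α₁ := hα₁.2 ⟨i, rfl, hi⟩
        linarith
    | succ t ih =>
        intro ht
        have ht' : t < L + 1 := lt_trans (Nat.lt_succ_self t) ht
        have hstep := ih ht'
        set a := p ⟨t + 1, ht⟩ with ha
        set b := p ⟨t, ht'⟩ with hb
        have htL : t < L := Nat.lt_of_succ_lt_succ ht
        have hpos : 0 < F a b := by
          have := hppos ⟨t, htL⟩
          have h1 : (⟨t, htL⟩ : Fin L).succ = (⟨t + 1, ht⟩ : Fin (L + 1)) := rfl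
          have h2 : (⟨t, htL⟩ : Fin L).castSucc = (⟨t, ht'⟩ : Fin (L + 1)) := rfl
          rwa [h1, h2] at this
        have hFab : α₂ ≤ F a b := hα₂.2 ⟨a, b, rfl, hpos⟩
        have hd0 : 0 ≤ (1 - α₁) * α₂ ^ t :=
          mul_nonneg (by linarith) (pow_nonneg hα₂pos.le t)
        rw [hrec]
        have split : ∑ j, F a j * (∑ l, (F ^ (t + 1)) j l)
            = F a b * (∑ l, (F ^ (t + 1)) b l)
              + ∑ j ∈ univ.erase b, F a j * (∑ l, (F ^ (t + 1)) j l) :=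
          (Finset.add_sum_erase _ _ (mem_univ b)).symm
        have h2 : ∑ j ∈ univ.erase b, F a j * (∑ l, (F ^ (t + 1)) j l)
            ≤ ∑ j ∈ univ.erase b, F a j :=
          Finset.sum_le_sum fun j _ => mul_le_of_le_one_right (hnn a j) (hr_le_one _ j)
        have h3 : ∑ j ∈ univ.erase b, F a j + F a b = ∑ j, F a j :=
          Finset.sum_erase_add _ _ (mem_univ b)
        have h4 : F a b * (∑ l, (F ^ (t + 1)) b l)
            ≤ F a b * (1 - (1 - α₁) * α₂ ^ t) :=
          mul_le_mul_of_nonneg_left (by linarith) hpos.le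
        have h5 : α₂ * ((1 - α₁) * α₂ ^ t) ≤ F a b * ((1 - α₁) * α₂ ^ t) :=
          mul_le_mul_of_nonneg_right hFab hd0
        have hring : F a b * (1 - (1 - α₁) * α₂ ^ t)
            = F a b - F a b * ((1 - α₁) * α₂ ^ t) := by ring
        have hring2 : α₂ * ((1 - α₁) * α₂ ^ t) = (1 - α₁) * α₂ ^ (t + 1) := by ring
        have hrowa := hrow a
        linarith [split, h2, h3, h4, h5]
  -- bound on row sums of F ^ (Lstar + 1)
  have hβbound : ∀ k : Fin n, ∑ j, (F ^ (Lstar + 1)) k j ≤ β := by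
    intro k
    by_cases hk : ∑ j, F k j = 1
    · obtain ⟨i, hi, L, hLle, hch⟩ := hchain k hk
      have h1 := hkey i k L hi hch
      have hmon := hr_anti k (L + 1) (Lstar + 1) (by omega)
      have hαpow : α₂ ^ Lstar ≤ α₂ ^ L :=
        pow_le_pow_of_le_one hα₂pos.le hα₂le1 hLle
      have : (1 - α₁) * α₂ ^ Lstar ≤ (1 - α₁) * α₂ ^ L :=
        mul_le_mul_of_nonneg_left hαpow (by linarith)
      simp only [hβdef]; linarith
    · have hk' : ∑ j, F k j < 1 := lt_of_le_of_ne (hrow k) hk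
      have hkα : ∑ j, F k j ≤ α₁ := hα₁.2 ⟨k, rfl, hk'⟩
      have hmon := hr_anti k 1 (Lstar + 1) (by omega)
      have h1 : ∑ j, (F ^ 1) k j ≤ α₁ := by simpa [pow_one] using hkα
      have : (1 - α₁) * α₂ ^ Lstar ≤ 1 - α₁ :=
        mul_le_of_le_one_right (by linarith) hpowle1
      simp only [hβdef]; linarith
  -- spectral part
  set m := Lstar + 1 with hm
  set G := F.map (algebraMap ℝ ℂ) with hG
  have hGspec : (spectrum ℂ G).Nonempty :=
    spectrum.nonempty_of_isAlgClosed_of_finiteDimensional ℂ G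
  haveI : Nonempty (spectrum ℂ G) := hGspec.to_subtype
  have habs : ∀ μ ∈ spectrum ℂ G, ‖μ‖ ^ m ≤ β := by
    intro μ hμ
    have hpow : μ ^ m ∈ spectrum ℂ (G ^ m) :=
      spectrum.pow_image_subset G m ⟨μ, hμ, rfl⟩
    have hGm : G ^ m = (F ^ m).map (algebraMap ℝ ℂ) := by
      simp only [hG, ← RingHom.mapMatrix_apply, ← map_pow]
    rw [hGm] at hpow
    have heig : Module.End.HasEigenvalue
        (Matrix.toLin' ((F ^ m).map (algebraMap ℝ ℂ))) (μ ^ m) := by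
      rw [Module.End.hasEigenvalue_iff_mem_spectrum]
      have heq : Matrix.toLin' ((F ^ m).map (algebraMap ℝ ℂ))
          = Matrix.toLinAlgEquiv' ((F ^ m).map (algebraMap ℝ ℂ)) := rfl
      rw [heq, AlgEquiv.spectrum_eq]
      exact hpow
    obtain ⟨k, hk⟩ := eigenvalue_mem_ball heig
    rw [Metric.mem_closedBall, dist_eq_norm] at hk
    have hnorm : ∀ j, ‖((F ^ m).map (algebraMap ℝ ℂ)) k j‖ = (F ^ m) k j := by
      intro j
      simp only [Matrix.map_apply]
      rw [show (algebraMap ℝ ℂ) ((F ^ m) k j) = ((F ^ m) k j : ℂ) from rfl,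
        Complex.norm_real]
      exact Real.norm_of_nonneg (hFm_nn m k j)
    have hsum : ((F ^ m) k k) + ∑ j ∈ univ.erase k, (F ^ m) k j = ∑ j, (F ^ m) k j :=
      Finset.add_sum_erase _ _ (mem_univ k)
    have hnorm_le : ‖μ ^ m‖ ≤ ∑ j, (F ^ m) k j := by
      have h1 : ‖μ ^ m‖ ≤ ‖((F ^ m).map (algebraMap ℝ ℂ)) k k‖
          + ‖μ ^ m - ((F ^ m).map (algebraMap ℝ ℂ)) k k‖ := norm_le_norm_add_norm_sub' _ _
      have h2 : ∑ j ∈ univ.erase k, ‖((F ^ m).map (algebraMap ℝ ℂ)) k j‖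
          = ∑ j ∈ univ.erase k, (F ^ m) k j :=
        Finset.sum_congr rfl fun j _ => hnorm j
      rw [h2] at hk
      rw [hnorm k] at h1
      linarith
    calc ‖μ‖ ^ m = ‖μ ^ m‖ := by
          rw [norm_pow]
      _ ≤ ∑ j, (F ^ m) k j := hnorm_le
      _ ≤ β := hβbound k
  have hmcast : ((m : ℕ) : ℝ) = (Lstar : ℝ) + 1 := by rw [hm]; push_cast; ring
  have hexp : ((Lstar : ℝ) + 1)⁻¹ = ((m : ℕ) : ℝ)⁻¹ := by rw [hmcast]
  constructor
  · rw [specRad, hexp]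
    apply ciSup_le
    rintro ⟨μ, hμ⟩
    have h1 := habs μ hμ
    have h2 : ‖μ‖ = (‖μ‖ ^ m) ^ (((m : ℕ) : ℝ)⁻¹) :=
      (Real.pow_rpow_inv_natCast (norm_nonneg μ) (by omega)).symm
    rw [h2]
    exact Real.rpow_le_rpow (pow_nonneg (norm_nonneg μ) m) h1 (by positivity)
  · exact Real.rpow_lt_one hβ0 hβ1 (by positivity)
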